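/- For a domain R, an ideal I ⊆ R, and an element f ∈ R, the intersection Rf⁻¹ ∩ Γ(R,I) equals (Rf : I^∞)·f⁻¹, where (Rf : I^∞) = {r ∈ R : for every g ∈ I there exists n ∈ ℕ with r·gⁿ ∈ Rf}. -/

import Mathlib

noncomputable section

def locAt (R K : Type) [CommRing R] [Field K] [Algebra R K] (r : R) : Subring K :=
  (Algebra.adjoin R {(algebraMap R K r)⁻¹}).toSubring

def Gamma (R K : Type) [CommRing R] [Field K] [Algebra R K] (I : Ideal R) : Set K :=
  ⋂ (r : R) (_ : r ∈ I) (_ : r ≠ 0), (locAt R K r : Set K)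

/-- The saturation `(Rf : I^∞) = {r ∈ R | ∀ g ∈ I, ∃ n, r·gⁿ ∈ Rf}`. -/
def satur (R : Type) [CommRing R] (I : Ideal R) (f : R) : Set R :=
  {r : R | ∀ g ∈ I, ∃ n : ℕ, r * g ^ n ∈ Ideal.span {f}}

lemma mem_locAt_iff (R K : Type) [CommRing R] [Field K] [Algebra R K] (g : R)
    (hg : algebraMap R K g ≠ 0) (x : K) :
    x ∈ locAt R K g ↔ ∃ s : R, ∃ n : ℕ, x = algebraMap R K s / (algebraMap R K g) ^ n := by
  constructor
  · intro hx
    induction hx using Algebra.adjoin_induction with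
    | mem y hy =>
      rcases hy with rfl
      exact ⟨1, 1, by rw [map_one, pow_one, one_div]⟩
    | algebraMap s => exact ⟨s, 0, by simp⟩
    | add a b _ _ ha hb =>
      obtain ⟨s₁, n₁, rfl⟩ := ha
      obtain ⟨s₂, n₂, rfl⟩ := hb
      refine ⟨s₁ * g ^ n₂ + s₂ * g ^ n₁, n₁ + n₂, ?_⟩
      push_cast [map_add, map_mul, map_pow]
      field_simp
      ring
    | mul a b _ _ ha hb =>
      obtain ⟨s₁, n₁, rfl⟩ := ha
      obtain ⟨s₂, n₂, rfl⟩ := hb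
      refine ⟨s₁ * s₂, n₁ + n₂, ?_⟩
      rw [map_mul, pow_add, div_mul_div_comm]
  · rintro ⟨s, n, rfl⟩
    have h1 : (algebraMap R K s) ∈ locAt R K g := Subalgebra.algebraMap_mem _ s
    have h2 : ((algebraMap R K g)⁻¹ : K) ∈ locAt R K g :=
      Algebra.subset_adjoin rfl
    have := mul_mem h1 (pow_mem h2 n)
    simpa [div_eq_mul_inv, inv_pow] using this

/-- `Rf⁻¹ ∩ Γ(R,I) = (Rf : I^∞)·f⁻¹` inside the fraction field of `R`. -/
theorem inter_gamma_eq_satur (R K : Type) [CommRing R] [IsDomain R] [Field K] [Algebra R K]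
    [IsFractionRing R K] (I : Ideal R) (f : R) (hf : f ≠ 0) :
    {x : K | ∃ r : R, x = algebraMap R K r / algebraMap R K f} ∩ Gamma R K I
      = {x : K | ∃ r ∈ satur R I f, x = algebraMap R K r / algebraMap R K f} := by
  have hinj : Function.Injective (algebraMap R K) := IsFractionRing.injective R K
  have hφf : algebraMap R K f ≠ 0 := fun h => hf (hinj (by simpa using h))
  ext x
  simp only [Set.mem_inter_iff, Set.mem_setOf_eq]
  constructor
  · rintro ⟨⟨r, rfl⟩, hx⟩
    refine ⟨r, ?_, rfl⟩
    intro g hg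
    by_cases hg0 : g = 0
    · exact ⟨1, by simp [hg0]⟩
    · have hφg : algebraMap R K g ≠ 0 := fun h => hg0 (hinj (by simpa using h))
      have hxg : (algebraMap R K r / algebraMap R K f) ∈ locAt R K g := by
        have := Set.mem_iInter.mp hx g
        have := Set.mem_iInter.mp this hg
        exact Set.mem_iInter.mp this hg0
      obtain ⟨s, n, heq⟩ := (mem_locAt_iff R K g hφg _).mp hxg
      refine ⟨n, ?_⟩
      rw [Ideal.mem_span_singleton]
      refine ⟨s, ?_⟩
      apply hinj
      have key : algebraMap R K r * (algebraMap R K g) ^ n =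
          algebraMap R K f * algebraMap R K s := by
        field_simp at heq
        linear_combination heq
      simpa [map_mul, map_pow] using key
  · rintro ⟨r, hr, rfl⟩
    refine ⟨⟨r, rfl⟩, ?_⟩
    refine Set.mem_iInter.mpr fun g => Set.mem_iInter.mpr fun hg =>
      Set.mem_iInter.mpr fun hg0 => ?_
    obtain ⟨n, hn⟩ := hr g hg
    obtain ⟨s, hs⟩ := Ideal.mem_span_singleton.mp hn
    have hφg : algebraMap R K g ≠ 0 := fun h => hg0 (hinj (by simpa using h))
    refine (mem_locAt_iff R K g hφg _).mpr ⟨s, n, ?_⟩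
    have key : algebraMap R K (r * g ^ n) = algebraMap R K (f * s) := by rw [hs]
    rw [map_mul, map_pow, map_mul] at key
    field_simp
    linear_combination key
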